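/- arXiv:1012.4049 — 10 statements merged into one kernel-verified Lean document; each statement's English description precedes it below -/
import Mathlib

section
/- Let s ≥ 2 be an integer and define integers n₁ = 2s−3, nₛ = 3−2s, and nᵢ = 2s+2−4i for 2 ≤ i ≤ s−1. Then in SL(2,ℤ) the product ∏_{i=1}^{s} X₁^{−nᵢ}·X₂·X₁^{nᵢ}, taken with the factors in increasing order of i from left to right, equals (−1)^{s+1}·X₁^{6−5s}. (In particular this product is, up to sign, a power of X₁, which is why this sequence T_s serves as a Hurwitz system of a genus-1 simplified broken Lefschetz fibration.) -/
/-- `SL(2,ℤ)`. -/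
abbrev SL2Z := Matrix.SpecialLinearGroup (Fin 2) ℤ

/-- The matrix `X₁` with rows `(1,0),(1,1)`. -/
def X1 : SL2Z := ⟨!![1, 0; 1, 1], by norm_num [Matrix.det_fin_two_of]⟩

/-- The matrix `X₂` with rows `(1,-1),(0,1)`. -/
def X2 : SL2Z := ⟨!![1, -1; 0, 1], by norm_num [Matrix.det_fin_two_of]⟩

/-- `-E`, the negative of the identity matrix, as an element of `SL(2,ℤ)`. -/
def negE : SL2Z := ⟨!![-1, 0; 0, -1], by norm_num [Matrix.det_fin_two_of]⟩

def Lm (a : ℤ) : SL2Z := ⟨!![1, 0; a, 1], by norm_num [Matrix.det_fin_two_of]⟩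

def Pm (a d : ℤ) : SL2Z := ⟨!![a, 1; -(a*d) - 1, -d], by rw [Matrix.det_fin_two_of]; ring⟩

lemma Lm_mul_X1 (a : ℤ) : Lm a * X1 = Lm (a + 1) := by
  apply Subtype.ext
  simp only [Matrix.SpecialLinearGroup.coe_mul]
  simp only [Matrix.SpecialLinearGroup.coe_mul, Lm, X1]
  ext i j
  fin_cases i <;> fin_cases j <;> simp [Matrix.mul_apply, Fin.sum_univ_two] <;> ring

lemma X1_zpow (m : ℤ) : X1 ^ m = Lm m := by
  induction m using Int.induction_on with
  | zero =>
    rw [zpow_zero]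
    apply Subtype.ext
    ext i j
    fin_cases i <;> fin_cases j <;> simp [Lm, Matrix.one_apply]
  | succ k ih =>
    rw [zpow_add_one, ih, Lm_mul_X1]
  | pred k ih =>
    rw [zpow_sub_one, ih]
    have h2 : Lm (-(k : ℤ) - 1) * X1 = Lm (-(k : ℤ)) := by
      rw [Lm_mul_X1]; norm_num
    rw [← h2, mul_assoc, mul_inv_cancel, mul_one]

lemma A_eq (m : ℤ) : X1 ^ (-m) * X2 * X1 ^ m = negE * Pm (m - 1) (m + 1) := by
  rw [X1_zpow, X1_zpow]
  apply Subtype.ext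
  simp only [Matrix.SpecialLinearGroup.coe_mul]
  simp only [Matrix.SpecialLinearGroup.coe_mul, Lm, Pm, X1, X2, negE]
  ext i j
  fin_cases i <;> fin_cases j <;> simp [Matrix.mul_apply, Fin.sum_univ_two] <;> ring

lemma step_eq (a d : ℤ) :
    Pm a d * (X1 ^ (-(a - 2)) * X2 * X1 ^ (a - 2)) = negE * Pm (a - 4) (d + 1) := by
  rw [X1_zpow, X1_zpow]
  apply Subtype.ext
  simp only [Matrix.SpecialLinearGroup.coe_mul]
  simp only [Matrix.SpecialLinearGroup.coe_mul, Lm, Pm, X1, X2, negE]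
  ext i j
  fin_cases i <;> fin_cases j <;> simp [Matrix.mul_apply, Fin.sum_univ_two] <;> ring

lemma final_eq (a d : ℤ) :
    Pm a d * (X1 ^ (-(a - 1)) * X2 * X1 ^ (a - 1)) = Lm (a - d - 2) := by
  rw [X1_zpow, X1_zpow]
  apply Subtype.ext
  simp only [Matrix.SpecialLinearGroup.coe_mul]
  simp only [Matrix.SpecialLinearGroup.coe_mul, Lm, Pm, X1, X2]
  ext i j
  fin_cases i <;> fin_cases j <;> simp [Matrix.mul_apply, Fin.sum_univ_two] <;> ring

lemma negE_sq : negE * negE = 1 := by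
  apply Subtype.ext
  simp only [Matrix.SpecialLinearGroup.coe_mul]
  simp only [Matrix.SpecialLinearGroup.coe_mul, negE]
  ext i j
  fin_cases i <;> fin_cases j <;> simp [Matrix.mul_apply, Fin.sum_univ_two, Matrix.one_apply]

lemma Pm_congr {a d a' d' : ℤ} (h1 : a = a') (h2 : d = d') : Pm a d = Pm a' d' := by
  rw [h1, h2]

/-- for `s ≥ 2` and the exponents `n₁ = 2s-3`, `nₛ = 3-2s`,
`nᵢ = 2s+2-4i` for `2 ≤ i ≤ s-1`, the ordered product
`∏_{i=1}^{s} X₁^{-nᵢ} X₂ X₁^{nᵢ}` equals `(-1)^{s+1} X₁^{6-5s}`. -/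
theorem product_of_Ts (s : ℕ) (hs : 2 ≤ s) (n : ℕ → ℤ)
    (h1 : n 1 = 2 * s - 3)
    (hlast : n s = 3 - 2 * s)
    (hmid : ∀ i : ℕ, 2 ≤ i → i ≤ s - 1 → n i = 2 * s + 2 - 4 * i) :
    ((List.range s).map (fun j => X1 ^ (-(n (j + 1))) * X2 * X1 ^ (n (j + 1)))).prod
      = negE ^ (s + 1) * X1 ^ (6 - 5 * (s : ℤ)) := by
  obtain ⟨t, rfl⟩ : ∃ t, s = t + 2 := ⟨s - 2, by omega⟩
  set f : ℕ → SL2Z := fun j => X1 ^ (-(n (j + 1))) * X2 * X1 ^ (n (j + 1)) with hf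
  have key : ∀ k : ℕ, 1 ≤ k → k ≤ t + 1 →
      ((List.range k).map f).prod
        = negE ^ k * Pm (2 * ((t : ℤ) + 2) - 4 * k) (2 * ((t : ℤ) + 2) + k - 3) := by
    intro k hk
    induction k, hk using Nat.le_induction with
    | base =>
      intro _
      have hn1 : n 1 = 2 * ((t : ℤ) + 2) - 3 := by rw [h1]; push_cast; ring
      simp only [show List.range 1 = [0] from rfl, List.map_cons, List.map_nil,
        List.prod_cons, List.prod_nil, mul_one, hf]
      rw [show (0 : ℕ) + 1 = 1 from rfl, hn1, A_eq, pow_one]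
      rw [Pm_congr (a' := 2 * ((t : ℤ) + 2) - 4 * ((1 : ℕ) : ℤ))
        (d' := 2 * ((t : ℤ) + 2) + ((1 : ℕ) : ℤ) - 3) (by push_cast; ring) (by push_cast; ring)]
    | succ k hk ih =>
      intro hk1
      rw [List.range_succ, List.map_append, List.prod_append, ih (by omega)]
      have hnk : n (k + 1) = 2 * ((t : ℤ) + 2) - 4 * (k : ℤ) - 2 := by
        rw [hmid (k + 1) (by omega) (by omega)]; push_cast; ring
      simp only [List.map_cons, List.map_nil, List.prod_cons, List.prod_nil, mul_one, hf]
      rw [hnk, mul_assoc, step_eq, ← mul_assoc, ← pow_succ]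
      rw [Pm_congr (a' := 2 * ((t : ℤ) + 2) - 4 * ((k + 1 : ℕ) : ℤ))
        (d' := 2 * ((t : ℤ) + 2) + ((k + 1 : ℕ) : ℤ) - 3) (by push_cast; ring) (by push_cast; ring)]
  rw [show List.range (t + 2) = List.range (t + 1) ++ [t + 1] from List.range_succ (n := t + 1),
    List.map_append, List.prod_append, key (t + 1) (by omega) (le_refl _)]
  have hns : n (t + 1 + 1) = 2 * ((t : ℤ) + 2) - 4 * ((t + 1 : ℕ) : ℤ) - 1 := by
    rw [show t + 1 + 1 = t + 2 from rfl, hlast]; push_cast; ring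
  simp only [List.map_cons, List.map_nil, List.prod_cons, List.prod_nil, mul_one, hf]
  rw [hns, mul_assoc, final_eq, X1_zpow]
  have harg : 2 * ((t : ℤ) + 2) - 4 * ((t + 1 : ℕ) : ℤ)
      - (2 * ((t : ℤ) + 2) + ((t + 1 : ℕ) : ℤ) - 3) - 2 = 6 - 5 * ((t + 2 : ℕ) : ℤ) := by
    push_cast; ring
  rw [harg, show negE ^ (t + 2 + 1) = negE ^ (t + 1) from by
    rw [show t + 2 + 1 = (t + 1) + 2 from rfl, pow_add, pow_two, negE_sq, mul_one]]
end

section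
/- For an integer s ≥ 2 let w(s) denote the product ∏_{i=1}^{s} X₁^{−nᵢ}·X₂·X₁^{nᵢ} in SL(2,ℤ), where n₁ = 2s−3, nₛ = 3−2s, and nᵢ = 2s+2−4i for 2 ≤ i ≤ s−1, with factors in increasing order of i. Then for every integer s ≥ 4 one has the recursion w(s) = X₁⁻⁵ · w(s−2) · X₁⁻⁵. -/
/-- The exponent sequence of `T_s`: `n₁ = 2s-3`, `nₛ = 3-2s`, and
`nᵢ = 2s+2-4i` for the intermediate indices. -/
def nseq (s i : ℕ) : ℤ :=
  if i = 1 then 2 * s - 3 else if i = s then 3 - 2 * s else 2 * s + 2 - 4 * i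

/-- The product `w(s) = ∏_{i=1}^{s} X₁^{-nᵢ} X₂ X₁^{nᵢ}` in `SL(2,ℤ)`,
with factors in increasing order of `i`. -/
def w (s : ℕ) : SL2Z :=
  ((List.range s).map (fun j => X1 ^ (-(nseq s (j + 1))) * X2 * X1 ^ (nseq s (j + 1)))).prod

lemma X1_inv : ((X1⁻¹ : SL2Z) : Matrix (Fin 2) (Fin 2) ℤ) = !![1, 0; -1, 1] := by
  have h : X1 * (show SL2Z from ⟨!![1,0;-1,1], by norm_num [Matrix.det_fin_two_of]⟩) = 1 := by
    apply Subtype.ext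
    rw [Matrix.SpecialLinearGroup.coe_mul]
    simp [X1, Matrix.SpecialLinearGroup.coe_mul, Matrix.mul_fin_two, Matrix.one_fin_two]
  rw [inv_eq_of_mul_eq_one_right h]

lemma X1_zpow_s1 (n : ℤ) : ((X1 ^ n : SL2Z) : Matrix (Fin 2) (Fin 2) ℤ) = !![1, 0; n, 1] := by
  induction n using Int.induction_on with
  | zero => simp [Matrix.one_fin_two]
  | succ k ih =>
    rw [zpow_add_one, Matrix.SpecialLinearGroup.coe_mul, ih, X1]
    simp [Matrix.mul_fin_two]
  | pred k ih =>
    rw [zpow_sub_one, Matrix.SpecialLinearGroup.coe_mul, ih, X1_inv]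
    simp [Matrix.mul_fin_two]
    ring

lemma conj_eq (n : ℤ) :
    ((X1 ^ (-n) * X2 * X1 ^ n : SL2Z) : Matrix (Fin 2) (Fin 2) ℤ)
      = !![1 - n, -1; n ^ 2, 1 + n] := by
  rw [Matrix.SpecialLinearGroup.coe_mul, Matrix.SpecialLinearGroup.coe_mul, X1_zpow_s1, X1_zpow_s1]
  simp only [X2]
  ext i j
  fin_cases i <;> fin_cases j <;> simp [Matrix.mul_fin_two] <;> ring

/-- Partial products of `w s`. -/
lemma partial_prod (s : ℕ) (hs : 2 ≤ s) : ∀ k : ℕ, 1 ≤ k → k ≤ s - 1 →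
    ((((List.range k).map
        (fun j => X1 ^ (-(nseq s (j + 1))) * X2 * X1 ^ (nseq s (j + 1)))).prod : SL2Z)
      : Matrix (Fin 2) (Fin 2) ℤ)
      = !![(-1 : ℤ)^(k+1) * (4*(k : ℤ) - 2*(s : ℤ)), (-1 : ℤ)^k;
           (-1 : ℤ)^k * ((4*(k : ℤ) - 2*(s : ℤ)) * (2*(s : ℤ) + (k : ℤ) - 3) - 1),
           (-1 : ℤ)^(k+1) * (2*(s : ℤ) + (k : ℤ) - 3)] := by
  intro k
  induction k with
  | zero => omega
  | succ k ih =>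
    intro _ hk
    rcases Nat.eq_zero_or_pos k with rfl | hk1
    · -- base case k+1 = 1
      have hn : nseq s 1 = 2 * s - 3 := by simp [nseq]
      simp only [List.range_succ, List.range_zero, List.nil_append, List.map_cons, List.map_nil,
        List.prod_cons, List.prod_nil, mul_one, Nat.zero_add, hn, conj_eq]
      ext i j
      fin_cases i <;> fin_cases j <;> simp <;> push_cast <;> ring
    · have hk' : k ≤ s - 1 := by omega
      have ihk := ih hk1 hk'
      rw [List.range_succ, List.map_append, List.prod_append]
      simp only [List.map_cons, List.map_nil, List.prod_cons, List.prod_nil, mul_one]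
      have hn : nseq s (k + 1) = 2 * (s : ℤ) - 2 - 4 * (k : ℤ) := by
        have h1 : k + 1 ≠ 1 := by omega
        have h2 : k + 1 ≠ s := by omega
        simp only [nseq, if_neg h1, if_neg h2]
        push_cast; ring
      rw [Matrix.SpecialLinearGroup.coe_mul, ihk, hn, conj_eq]
      ext i j
      fin_cases i <;> fin_cases j <;> simp [Matrix.mul_fin_two] <;> push_cast <;> ring

/-- Closed form: `w s = (-1)^(s+1) ⬝ X1^(6-5s)`. -/
lemma w_closed (s : ℕ) (hs : 2 ≤ s) :
    ((w s : SL2Z) : Matrix (Fin 2) (Fin 2) ℤ)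
      = !![(-1 : ℤ)^(s+1), 0; (-1 : ℤ)^(s+1) * (6 - 5*(s : ℤ)), (-1 : ℤ)^(s+1)] := by
  obtain ⟨t, rfl⟩ : ∃ t, s = t + 2 := ⟨s - 2, by omega⟩
  have hP := partial_prod (t+2) hs (t+1) (by omega) (by omega)
  rw [w, List.range_succ, List.map_append, List.prod_append]
  simp only [List.map_cons, List.map_nil, List.prod_cons, List.prod_nil, mul_one]
  have hn : nseq (t+2) (t+1+1) = 3 - 2 * ((t : ℤ)+2) := by
    have h1 : t + 2 ≠ 1 := by omega
    simp only [nseq, if_neg h1, if_pos rfl]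
    push_cast; ring
  rw [Matrix.SpecialLinearGroup.coe_mul, hP, hn, conj_eq]
  ext i j
  fin_cases i <;> fin_cases j <;> simp [Matrix.mul_fin_two] <;> push_cast <;> ring

/-- for every integer `s ≥ 4`, `w(s) = X₁⁻⁵ ⬝ w(s-2) ⬝ X₁⁻⁵`. -/
theorem w_recursion (s : ℕ) (hs : 4 ≤ s) :
    w s = X1 ^ (-5 : ℤ) * w (s - 2) * X1 ^ (-5 : ℤ) := by
  obtain ⟨t, rfl⟩ : ∃ t, s = t + 4 := ⟨s - 4, by omega⟩
  apply Subtype.ext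
  rw [show t + 4 - 2 = t + 2 from by omega]
  rw [Matrix.SpecialLinearGroup.coe_mul, Matrix.SpecialLinearGroup.coe_mul,
    X1_zpow_s1, w_closed (t+4) (by omega), w_closed (t+2) (by omega)]
  ext i j
  fin_cases i <;> fin_cases j <;> simp [Matrix.mul_fin_two] <;> push_cast <;> ring
end

section
/- For all integers k ≥ 4 and l with 1 ≤ l ≤ k−3, the composite map t_{(2,2l−1)} ∘ t_{(2,2l−3)} ∘ ⋯ ∘ t_{(2,3)} ∘ t_{(2,1)} : ℤ² → ℤ² (where t_{(2,1)} is applied first) sends the vector (4k−10, 1) either to the vector (4k−10−4l, 4lk−4l²−10l+1) or to its negative. -/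
/-- The Picard–Lefschetz action on `H₁(T²;ℤ) ≅ ℤ²` of the right-handed Dehn twist
along the `(p,q)`-curve: `t_c(v₁,v₂) = (v₁ − (v₁q − v₂p)p, v₂ − (v₁q − v₂p)q)`. -/
def twist (c : ℤ × ℤ) (v : ℤ × ℤ) : ℤ × ℤ :=
  (v.1 - (v.1 * c.2 - v.2 * c.1) * c.1, v.2 - (v.1 * c.2 - v.2 * c.1) * c.2)

lemma twist_fold_eq (k : ℤ) (l : ℕ) :
    (List.range l).foldl (fun v j => twist (2, 2 * (j + 1 : ℤ) - 1) v) (4 * k - 10, 1)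
      = ((-1) ^ l * (4 * k - 10 - 4 * l),
         (-1) ^ l * (4 * l * k - 4 * (l : ℤ) ^ 2 - 10 * l + 1)) := by
  induction l with
  | zero => simp
  | succ n ih =>
      simp only [List.range_succ, List.pure_def, List.bind_eq_flatMap, List.flatMap_append,
        List.foldl_append, List.flatMap_cons, List.flatMap_nil, List.append_nil,
        List.foldl_cons, List.foldl_nil] at ih ⊢
      rw [ih]
      simp only [twist, Prod.mk.injEq]
      push_cast
      constructor <;> ring

/-- for all integers `k ≥ 4` and `1 ≤ l ≤ k-3`, the composite
`t_{(2,2l−1)} ∘ ⋯ ∘ t_{(2,1)}` (with `t_{(2,1)}` applied first) sends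
`(4k−10, 1)` to `±(4k−10−4l, 4lk−4l²−10l+1)`. -/
theorem twist_iterate_formula_one (k : ℤ) (hk : 4 ≤ k) (l : ℕ) (hl1 : 1 ≤ l)
    (hl2 : (l : ℤ) ≤ k - 3) :
    (List.range l).foldl (fun v j => twist (2, 2 * (j + 1 : ℤ) - 1) v) (4 * k - 10, 1)
        = (4 * k - 10 - 4 * l, 4 * l * k - 4 * l ^ 2 - 10 * l + 1) ∨
    (List.range l).foldl (fun v j => twist (2, 2 * (j + 1 : ℤ) - 1) v) (4 * k - 10, 1)
        = (-(4 * k - 10 - 4 * l), -(4 * l * k - 4 * l ^ 2 - 10 * l + 1)) := by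
  rw [twist_fold_eq]
  rcases Int.even_or_odd l with h | h
  · left
    rw [(Even.neg_one_pow (by exact_mod_cast h) : ((-1 : ℤ)) ^ l = 1)]
    simp
  · right
    rw [(Odd.neg_one_pow (by exact_mod_cast h) : ((-1 : ℤ)) ^ l = -1)]
    simp
end

section
/- For all integers k ≥ 3 and l with 1 ≤ l ≤ k−2, the composite map t_{(2,2l−1)} ∘ t_{(2,2l−3)} ∘ ⋯ ∘ t_{(2,3)} ∘ t_{(2,1)} : ℤ² → ℤ² (where t_{(2,1)} is applied first) sends the vector (4k−7, 1) either to the vector (4k−7−4l, 4lk−4l²−7l+1) or to its negative. -/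
lemma twist_aux (k : ℤ) (l : ℕ) :
    (List.range l).foldl (fun v j => twist (2, 2 * (j + 1 : ℤ) - 1) v) (4 * k - 7, 1)
      = ((-1) ^ l * (4 * k - 7 - 4 * l),
         (-1 : ℤ) ^ l * (4 * l * k - 4 * (l : ℤ) ^ 2 - 7 * l + 1)) := by
  induction l with
  | zero => simp
  | succ n ih =>
      simp only [List.range_succ, List.pure_def, List.bind_eq_flatMap,
        List.flatMap_append, List.flatMap_cons, List.flatMap_nil, List.append_nil,
        List.foldl_append, List.foldl_cons, List.foldl_nil] at ih ⊢
      rw [ih]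
      simp only [twist, Prod.mk.injEq]
      push_cast
      constructor <;> ring

/-- for all integers `k ≥ 3` and `1 ≤ l ≤ k-2`, the composite
`t_{(2,2l−1)} ∘ ⋯ ∘ t_{(2,1)}` (with `t_{(2,1)}` applied first) sends
`(4k−7, 1)` to `±(4k−7−4l, 4lk−4l²−7l+1)`. -/
theorem twist_iterate_formula_two (k : ℤ) (hk : 3 ≤ k) (l : ℕ) (hl1 : 1 ≤ l)
    (hl2 : (l : ℤ) ≤ k - 2) :
    (List.range l).foldl (fun v j => twist (2, 2 * (j + 1 : ℤ) - 1) v) (4 * k - 7, 1)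
        = (4 * k - 7 - 4 * l, 4 * l * k - 4 * l ^ 2 - 7 * l + 1) ∨
    (List.range l).foldl (fun v j => twist (2, 2 * (j + 1 : ℤ) - 1) v) (4 * k - 7, 1)
        = (-(4 * k - 7 - 4 * l), -(4 * l * k - 4 * l ^ 2 - 7 * l + 1)) := by
  rw [twist_aux]
  rcases Nat.even_or_odd l with h | h
  · left
    rw [h.neg_one_pow]
    simp
  · right
    rw [h.neg_one_pow]
    simp [Prod.ext_iff]
end

section
/- For every integer k ≥ 4, set G = T(2,1)·T(2,3)·T(2,5)⋯T(2,2k−7) ∈ SL(2,ℤ), the product of the matrices T(2,2l−1) for l = 1,…,k−3 with factors in increasing order of l from left to right. Then G⁻¹ · T(4k−10,1) · G = T(2,2k−5); that is, the conjugate of the Dehn-twist matrix T(4k−10,1) by the composition of the twists T_{2,1},…,T_{2,2k−7} is the Dehn-twist matrix T(2,2k−5). -/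
/-- The matrix of the right-handed Dehn twist `T_{p,q}` along the `(p,q)`-curve:
rows `(1-pq, -q²)` and `(p², 1+pq)`. -/
def Tmat (p q : ℤ) : SL2Z :=
  ⟨!![1 - p * q, -q ^ 2; p ^ 2, 1 + p * q], by rw [Matrix.det_fin_two_of]; ring⟩

/-- Closed form for the partial products `T(2,1)·T(2,3)⋯T(2,2n−1)`. -/
def Pmat (n : ℕ) : SL2Z :=
  ⟨!![(-1) ^ n, (-1) ^ n * n; (-1) ^ (n + 1) * (4 * n), (-1) ^ (n + 1) * (4 * n ^ 2 - 1)], by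
    rw [Matrix.det_fin_two_of]
    have h : ((-1 : ℤ)) ^ n * (-1) ^ n = 1 := by
      rw [← pow_add, ← two_mul, pow_mul]; norm_num
    rw [pow_succ]
    nlinarith [h]⟩

lemma prod_eq (n : ℕ) :
    (((List.range n).map (fun j => Tmat 2 (2 * (j + 1 : ℤ) - 1))).prod) = Pmat n := by
  simp only [bind_pure_comp, List.map_eq_map, List.map_map]
  induction n with
  | zero =>
    apply Subtype.ext
    simp [Pmat, Matrix.one_fin_two]
  | succ n ih =>
    rw [List.range_succ, List.map_append, List.prod_append, ih]
    apply Subtype.ext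
    show ((Pmat n : Matrix (Fin 2) (Fin 2) ℤ) * _) = _
    simp only [List.map_cons, List.map_nil, List.prod_cons, List.prod_nil, mul_one,
      Matrix.SpecialLinearGroup.coe_mul, Function.comp_apply]
    simp only [Pmat, Tmat]
    ext i j
    fin_cases i <;> fin_cases j <;>
      simp [Matrix.mul_apply, Fin.sum_univ_succ, pow_succ] <;> push_cast <;> ring

lemma commute_eq (n : ℕ) :
    Tmat (4 * (n : ℤ) + 2) 1 * Pmat n = Pmat n * Tmat 2 (2 * (n : ℤ) + 1) := by
  apply Subtype.ext
  simp only [Matrix.SpecialLinearGroup.coe_mul]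
  simp only [Pmat, Tmat]
  ext i j
  fin_cases i <;> fin_cases j <;>
    simp [Matrix.mul_apply, Fin.sum_univ_succ, pow_succ] <;> ring

/-- for every integer `k ≥ 4`, with
`G = T(2,1)·T(2,3)⋯T(2,2k−7)` (factors in increasing order of `l`),
one has `G⁻¹ · T(4k−10,1) · G = T(2,2k−5)`. -/
theorem conj_T_4k_sub_10 (k : ℕ) (hk : 4 ≤ k) :
    (((List.range (k - 3)).map (fun j => Tmat 2 (2 * (j + 1 : ℤ) - 1))).prod)⁻¹
        * Tmat (4 * (k : ℤ) - 10) 1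
        * ((List.range (k - 3)).map (fun j => Tmat 2 (2 * (j + 1 : ℤ) - 1))).prod
      = Tmat 2 (2 * (k : ℤ) - 5) := by
  obtain ⟨n, rfl⟩ : ∃ n, k = n + 3 := ⟨k - 3, by omega⟩
  have h3 : n + 3 - 3 = n := by omega
  have h1 : (4 * ((n + 3 : ℕ) : ℤ) - 10) = 4 * (n : ℤ) + 2 := by push_cast; ring
  have h2 : (2 * ((n + 3 : ℕ) : ℤ) - 5) = 2 * (n : ℤ) + 1 := by push_cast; ring
  rw [h3, h1, h2, prod_eq, mul_assoc, commute_eq, ← mul_assoc, inv_mul_cancel, one_mul]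
end

section
/- For every integer k ≥ 3, set G = T(2,1)·T(2,3)·T(2,5)⋯T(2,2k−5) ∈ SL(2,ℤ), the product of the matrices T(2,2l−1) for l = 1,…,k−2 with factors in increasing order of l from left to right. Then G⁻¹ · T(4k−7,1) · G = T(1,k−1); that is, the conjugate of the Dehn-twist matrix T(4k−7,1) by the composition of the twists T_{2,1},…,T_{2,2k−5} is the Dehn-twist matrix T(1,k−1). -/
/-- Closed form for the partial products. -/
def Gmat (n : ℕ) : SL2Z :=
  ⟨!![(-1 : ℤ) ^ n, (-1 : ℤ) ^ n * n; (-1 : ℤ) ^ n * (-4 * n), (-1 : ℤ) ^ n * (1 - 4 * n ^ 2)],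
    by
      rw [Matrix.det_fin_two_of]
      have h : ((-1 : ℤ) ^ n) * ((-1 : ℤ) ^ n) = 1 := by
        rw [← mul_pow]; norm_num
      linear_combination h⟩

lemma prod_eq_Gmat (n : ℕ) :
    ((List.range n).map (fun j => Tmat 2 (2 * (j + 1 : ℤ) - 1))).prod = Gmat n := by
  induction n with
  | zero =>
      apply Subtype.ext
      simp [Gmat, Matrix.SpecialLinearGroup.coe_one, Matrix.one_fin_two]
  | succ n ih =>
      have step : ((List.range (n + 1)).map (fun j => Tmat 2 (2 * (j + 1 : ℤ) - 1))).prod =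
          ((List.range n).map (fun j => Tmat 2 (2 * (j + 1 : ℤ) - 1))).prod
            * Tmat 2 (2 * ((n : ℤ) + 1) - 1) := by
        simp [List.range_succ]
      rw [step, ih]
      apply Subtype.ext
      rw [Matrix.SpecialLinearGroup.coe_mul]
      show (Gmat n).1 * (Tmat 2 (2 * ((n : ℤ) + 1) - 1)).1 = (Gmat (n + 1)).1
      simp only [Gmat, Tmat, Matrix.mul_fin_two]
      congr 1 <;> push_cast <;> ring

/-- for every integer `k ≥ 3`, with
`G = T(2,1)·T(2,3)⋯T(2,2k−5)` (factors in increasing order of `l`),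
one has `G⁻¹ · T(4k−7,1) · G = T(1,k−1)`. -/
theorem conj_T_4k_sub_7 (k : ℕ) (hk : 3 ≤ k) :
    (((List.range (k - 2)).map (fun j => Tmat 2 (2 * (j + 1 : ℤ) - 1))).prod)⁻¹
        * Tmat (4 * (k : ℤ) - 7) 1
        * ((List.range (k - 2)).map (fun j => Tmat 2 (2 * (j + 1 : ℤ) - 1))).prod
      = Tmat 1 ((k : ℤ) - 1) := by
  obtain ⟨n, rfl⟩ : ∃ n, k = n + 2 := ⟨k - 2, by omega⟩
  simp only [Nat.add_sub_cancel, prod_eq_Gmat]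
  rw [mul_assoc, inv_mul_eq_iff_eq_mul]
  apply Subtype.ext
  rw [Matrix.SpecialLinearGroup.coe_mul, Matrix.SpecialLinearGroup.coe_mul]
  show (Tmat _ 1).1 * (Gmat n).1 = (Gmat n).1 * (Tmat 1 _).1
  simp only [Gmat, Tmat, Matrix.mul_fin_two]
  congr 1 <;> push_cast <;> ring
end

section
/- For every integer s ≥ 3 there exists C ∈ SL(2,ℤ) such that T(2,1)·T(2,3)⋯T(2,2s−5)·T(1,s−1)·T(1,−1) = (−1)^{s+1} · C · X₁^{6−5s} · C⁻¹, where the initial product runs over the matrices T(2,2l−1) for l = 1,…,s−2 in increasing order of l. (This is the product-level content of the lemma that the Hurwitz system T_s can be changed by elementary transformations and simultaneous conjugations into the sequence (T_{2,1}, T_{2,3}, …, T_{2,2s−5}, T_{1,s−1}, T_{1,−1}), since elementary transformations preserve the total product and a simultaneous conjugation conjugates it.) -/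
/-- Auxiliary: the partial-product matrices. -/
def Amat (m : ℤ) : SL2Z :=
  ⟨!![1, m; -4 * m, 1 - 4 * m ^ 2], by rw [Matrix.det_fin_two_of]; ring⟩

/-- Auxiliary: `X₁^k` as an explicit matrix candidate. -/
def X1p (k : ℤ) : SL2Z :=
  ⟨!![1, 0; k, 1], by rw [Matrix.det_fin_two_of]; ring⟩

lemma X1p_mul (k l : ℤ) : X1p k * X1p l = X1p (k + l) := by
  apply Subtype.ext
  simp only [Matrix.SpecialLinearGroup.coe_mul]
  simp only [Matrix.SpecialLinearGroup.coe_mul, X1p, Matrix.mul_fin_two]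
  norm_num [add_comm]

lemma X1p_zero : X1p 0 = 1 := by
  apply Subtype.ext
  simp [X1p, Matrix.one_fin_two]

lemma X1_pow_nat (n : ℕ) : X1 ^ n = X1p n := by
  induction n with
  | zero => simp [X1p_zero]
  | succ n ih =>
    rw [pow_succ, ih]
    have : X1 = X1p 1 := by apply Subtype.ext; simp [X1, X1p]
    rw [this, X1p_mul]
    push_cast; ring_nf

lemma X1_zpow_s6 (k : ℤ) : X1 ^ k = X1p k := by
  cases k with
  | ofNat n => rw [Int.ofNat_eq_coe, zpow_natCast, X1_pow_nat]
  | negSucc n =>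
    rw [zpow_negSucc, X1_pow_nat]
    apply inv_eq_of_mul_eq_one_left
    rw [X1p_mul]
    rw [show (Int.negSucc n + ((n + 1 : ℕ) : ℤ) : ℤ) = 0 by
      rw [Int.negSucc_eq]; push_cast; ring, X1p_zero]

lemma Amat_step (m : ℤ) : Amat m * Tmat 2 (2 * m + 1) = negE * Amat (m + 1) := by
  apply Subtype.ext
  simp only [Matrix.SpecialLinearGroup.coe_mul]
  simp only [Matrix.SpecialLinearGroup.coe_mul, Amat, Tmat, negE, Matrix.mul_fin_two]
  ext i j
  fin_cases i <;> fin_cases j <;> simp <;> ring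

lemma partial_prod_s6 (n : ℕ) :
    ((List.range n).map (fun j => Tmat 2 (2 * (j + 1 : ℤ) - 1))).prod
      = negE ^ n * Amat n := by
  induction n with
  | zero =>
    simp only [List.range_zero, List.map_nil, List.prod_nil, pow_zero, one_mul]
    apply Subtype.ext
    simp [Amat, Matrix.one_fin_two]
  | succ n ih =>
    simp only [List.bind_eq_flatMap, List.pure_def] at ih ⊢
    simp only [List.range_succ, List.flatMap_append, List.flatMap_cons, List.flatMap_nil,
      List.map_append, List.prod_append, List.map_cons, List.map_nil, List.prod_cons,
      List.prod_nil, mul_one, List.append_nil, ih]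
    have h : (2 * ((n : ℤ) + 1) - 1) = 2 * (n : ℤ) + 1 := by ring
    rw [h, mul_assoc, Amat_step, ← mul_assoc, ← pow_succ]
    push_cast
    ring_nf

lemma final_step (s : ℕ) :
    Amat ((s : ℤ) - 2) * Tmat 1 ((s : ℤ) - 1) * Tmat 1 (-1)
      = negE * X1p (6 - 5 * (s : ℤ)) := by
  apply Subtype.ext
  simp only [Matrix.SpecialLinearGroup.coe_mul]
  simp only [Matrix.SpecialLinearGroup.coe_mul, Amat, Tmat, negE, X1p, Matrix.mul_fin_two]
  ext i j
  fin_cases i <;> fin_cases j <;> simp <;> ring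

/-- for every integer `s ≥ 3` there exists `C ∈ SL(2,ℤ)` with
`T(2,1)·T(2,3)⋯T(2,2s−5)·T(1,s−1)·T(1,−1) = (−1)^{s+1} · C · X₁^{6−5s} · C⁻¹`. -/
theorem transformed_Ts_product (s : ℕ) (hs : 3 ≤ s) :
    ∃ C : SL2Z,
      ((List.range (s - 2)).map (fun j => Tmat 2 (2 * (j + 1 : ℤ) - 1))).prod
          * Tmat 1 ((s : ℤ) - 1) * Tmat 1 (-1)
        = negE ^ (s + 1) * (C * X1 ^ (6 - 5 * (s : ℤ)) * C⁻¹) := by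
  refine ⟨1, ?_⟩
  rw [one_mul, inv_one, mul_one, partial_prod_s6, X1_zpow_s6]
  have hcast : ((s - 2 : ℕ) : ℤ) = (s : ℤ) - 2 := by omega
  have hnegE2 : negE * negE = 1 := by
    apply Subtype.ext
    simp only [Matrix.SpecialLinearGroup.coe_mul]
    simp [negE, Matrix.mul_fin_two, Matrix.one_fin_two]
  have hpow : negE ^ (s + 1) = negE ^ (s - 2) * negE := by
    have h3 : s + 1 = (s - 2) + 3 := by omega
    rw [h3, pow_add]
    congr 1
    rw [pow_succ, pow_two, hnegE2, one_mul]
  rw [hpow, hcast, mul_assoc, mul_assoc, ← mul_assoc (Amat _), final_step, ← mul_assoc]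
end

section
/- Let d and n be integers with d ≠ 1, and suppose that in SL(2,ℤ) the product X₂·X₁^d·X₂ equals X₁ⁿ or −X₁ⁿ. Then d = 2 and n = −2; moreover X₂·X₁²·X₂ = −X₁⁻². (This is the algebraic core of the classification of genus-1 simplified broken Lefschetz fibrations with two Lefschetz singularities and Hurwitz system (X₁^{−n₁}X₂X₁^{n₁}, X₁^{−n₂}X₂X₁^{n₂}), with d = n₁ − n₂.) -/
lemma sl_mul_val (A B : Matrix (Fin 2) (Fin 2) ℤ) (hA : A.det = 1) (hB : B.det = 1) :
    (@HMul.hMul SL2Z SL2Z SL2Z _ ⟨A, hA⟩ ⟨B, hB⟩).val = A * B := rfl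

lemma sl_mul_val' (X : SL2Z) (B : Matrix (Fin 2) (Fin 2) ℤ) (hB : B.det = 1) :
    (@HMul.hMul SL2Z SL2Z SL2Z _ X ⟨B, hB⟩).val = X.val * B := rfl

lemma X1_zpow_s7 (k : ℤ) : X1 ^ k = ⟨!![1, 0; k, 1], by norm_num [Matrix.det_fin_two_of]⟩ := by
  induction k using Int.induction_on with
  | zero => ext i j; fin_cases i <;> fin_cases j <;> simp
  | succ k ih =>
    rw [zpow_add_one, ih]
    ext i j
    fin_cases i <;> fin_cases j <;>
      simp [X1, sl_mul_val, sl_mul_val', Matrix.mul_apply, Fin.sum_univ_two] <;> ring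
  | pred k ih =>
    rw [sub_eq_add_neg, zpow_add, ih, zpow_neg_one]
    have hinv : X1⁻¹ = (⟨!![1, 0; -1, 1], by norm_num [Matrix.det_fin_two_of]⟩ : SL2Z) := by
      apply inv_eq_of_mul_eq_one_right
      ext i j
      fin_cases i <;> fin_cases j <;>
        simp [X1, sl_mul_val, sl_mul_val', Matrix.mul_apply, Fin.sum_univ_two]
    rw [hinv]
    ext i j
    fin_cases i <;> fin_cases j <;>
      simp [sl_mul_val, sl_mul_val', Matrix.mul_apply, Fin.sum_univ_two] <;> ring

/-- if `d ≠ 1` and `X₂·X₁^d·X₂ = ±X₁ⁿ` in `SL(2,ℤ)`, then `d = 2`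
and `n = −2`; moreover `X₂·X₁²·X₂ = −X₁⁻²`. -/
theorem two_singularities_case (d n : ℤ) (hd : d ≠ 1)
    (h : X2 * X1 ^ d * X2 = X1 ^ n ∨ X2 * X1 ^ d * X2 = negE * X1 ^ n) :
    d = 2 ∧ n = -2 ∧ X2 * X1 ^ (2 : ℤ) * X2 = negE * X1 ^ (-2 : ℤ) := by
  have key : ∀ m : ℤ, (X2 * X1 ^ m * X2 : SL2Z) =
      ⟨!![1 - m, m - 2; m, 1 - m], by norm_num [Matrix.det_fin_two_of]; ring⟩ := by
    intro m
    rw [X1_zpow_s7]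
    ext i j
    fin_cases i <;> fin_cases j <;>
      simp [X2, sl_mul_val, sl_mul_val', Matrix.mul_apply, Fin.sum_univ_two] <;> ring
  have last : X2 * X1 ^ (2 : ℤ) * X2 = negE * X1 ^ (-2 : ℤ) := by
    rw [key, X1_zpow_s7]
    ext i j
    fin_cases i <;> fin_cases j <;>
      simp [negE, sl_mul_val, sl_mul_val', Matrix.mul_apply, Fin.sum_univ_two]
  rcases h with h | h
  · exfalso
    rw [key, X1_zpow_s7] at h
    have h00 := congrArg (fun A : SL2Z => (A : Matrix (Fin 2) (Fin 2) ℤ) 0 0) h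
    have h01 := congrArg (fun A : SL2Z => (A : Matrix (Fin 2) (Fin 2) ℤ) 0 1) h
    simp at h00 h01
    omega
  · have hq : negE * X1 ^ n = ⟨!![-1, 0; -n, -1], by norm_num [Matrix.det_fin_two_of]⟩ := by
      rw [X1_zpow_s7]
      ext i j
      fin_cases i <;> fin_cases j <;>
        simp [negE, sl_mul_val, sl_mul_val', Matrix.mul_apply, Fin.sum_univ_two]
    rw [key, hq] at h
    have h00 := congrArg (fun A : SL2Z => (A : Matrix (Fin 2) (Fin 2) ℤ) 0 0) h
    have h10 := congrArg (fun A : SL2Z => (A : Matrix (Fin 2) (Fin 2) ℤ) 1 0) h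
    simp at h00 h10
    refine ⟨by omega, by omega, last⟩
end

section
/- Let d₁, d₂, d₃ and n be integers such that dᵢ ∉ {1,2} for i = 1,2,3, and such that (d₁,d₂) ≠ (3,3) and (d₂,d₃) ≠ (3,3). Suppose that in SL(2,ℤ) the product X₂·X₁^{d₁}·X₂·X₁^{d₂}·X₂·X₁^{d₃}·X₂ equals X₁ⁿ or −X₁ⁿ. Then (d₁,d₂,d₃) = (3,4,3) or (d₁,d₂,d₃) = (4,3,4). (This is the algebraic core of the classification of genus-1 simplified broken Lefschetz fibrations with four Lefschetz singularities, with dᵢ = nᵢ − n_{i+1} for a Hurwitz system (X₁^{−n₁}X₂X₁^{n₁}, …, X₁^{−n₄}X₂X₁^{n₄}).) -/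
lemma x1_zpow (d : ℤ) : (X1 ^ d : SL2Z) = ⟨!![1, 0; d, 1], by norm_num [Matrix.det_fin_two_of]⟩ := by
  induction d using Int.induction_on with
  | zero => ext i j; fin_cases i <;> fin_cases j <;> simp
  | succ k ih =>
      ext i j; rw [zpow_add_one, Matrix.SpecialLinearGroup.coe_mul, ih]
      fin_cases i <;> fin_cases j <;>
        simp [X1, Matrix.mul_apply, Fin.sum_univ_two] <;> ring
  | pred k ih =>
      ext i j; rw [zpow_sub_one, Matrix.SpecialLinearGroup.coe_mul, ih, Matrix.SpecialLinearGroup.coe_inv]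
      fin_cases i <;> fin_cases j <;>
        simp [X1, Matrix.adjugate_fin_two, Matrix.mul_apply, Fin.sum_univ_two] <;> ring

/-- if `d₁, d₂, d₃ ∉ {1,2}`, `(d₁,d₂) ≠ (3,3)`, `(d₂,d₃) ≠ (3,3)`,
and `X₂·X₁^{d₁}·X₂·X₁^{d₂}·X₂·X₁^{d₃}·X₂ = ±X₁ⁿ` in `SL(2,ℤ)`, then
`(d₁,d₂,d₃) = (3,4,3)` or `(4,3,4)`. -/
theorem four_singularities_case (d₁ d₂ d₃ n : ℤ)
    (hd₁ : d₁ ≠ 1 ∧ d₁ ≠ 2) (hd₂ : d₂ ≠ 1 ∧ d₂ ≠ 2) (hd₃ : d₃ ≠ 1 ∧ d₃ ≠ 2)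
    (h12 : (d₁, d₂) ≠ (3, 3)) (h23 : (d₂, d₃) ≠ (3, 3))
    (h : X2 * X1 ^ d₁ * X2 * X1 ^ d₂ * X2 * X1 ^ d₃ * X2 = X1 ^ n ∨
         X2 * X1 ^ d₁ * X2 * X1 ^ d₂ * X2 * X1 ^ d₃ * X2 = negE * X1 ^ n) :
    (d₁, d₂, d₃) = (3, 4, 3) ∨ (d₁, d₂, d₃) = (4, 3, 4) := by
  obtain ⟨h1a, h1b⟩ := hd₁
  obtain ⟨h2a, h2b⟩ := hd₂
  obtain ⟨h3a, h3b⟩ := hd₃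
  rcases h with h | h
  · -- case X₁ⁿ : impossible
    have e00 := congrArg (fun g : SL2Z => (g : Matrix (Fin 2) (Fin 2) ℤ) 0 0) h
    have e01 := congrArg (fun g : SL2Z => (g : Matrix (Fin 2) (Fin 2) ℤ) 0 1) h
    simp only [Matrix.SpecialLinearGroup.coe_mul] at e00 e01
    simp only [x1_zpow, X2, negE, Matrix.SpecialLinearGroup.coe_mul, Matrix.mul_apply,
      Fin.sum_univ_two] at e00 e01
    norm_num at e00 e01
    have k1 : (d₁ - 2) * (d₂ - 2) = 0 := by linear_combination -e00 - e01
    rcases mul_eq_zero.mp k1 with hk | hk <;> omega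
  · have e00 := congrArg (fun g : SL2Z => (g : Matrix (Fin 2) (Fin 2) ℤ) 0 0) h
    have e01 := congrArg (fun g : SL2Z => (g : Matrix (Fin 2) (Fin 2) ℤ) 0 1) h
    simp only [Matrix.SpecialLinearGroup.coe_mul] at e00 e01
    simp only [x1_zpow, X2, negE, Matrix.SpecialLinearGroup.coe_mul, Matrix.mul_apply,
      Fin.sum_univ_two] at e00 e01
    norm_num at e00 e01
    have k1 : (d₁ - 2) * (d₂ - 2) = 2 := by linear_combination -e00 - e01
    have hdvd : (d₁ - 2) ∣ 2 := ⟨d₂ - 2, k1.symm⟩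
    have hb1 : d₁ - 2 ≤ 2 := Int.le_of_dvd (by norm_num) hdvd
    have hb2 : -(d₁ - 2) ≤ 2 := Int.le_of_dvd (by norm_num) ((neg_dvd).mpr hdvd)
    have hb3 : 0 ≤ d₁ := by omega
    have hb4 : d₁ ≤ 4 := by omega
    clear hdvd hb1 hb2 e01 h h12 h23
    interval_cases d₁ <;> ring_nf at k1
    · exfalso; omega
    · exfalso; omega
    · exfalso; omega
    · -- d₁ = 3
      have hd2 : d₂ = 4 := by omega
      subst hd2
      ring_nf at e00
      have hd3 : d₃ = 3 := by omega
      subst hd3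
      left; rfl
    · -- d₁ = 4
      have hd2 : d₂ = 3 := by omega
      subst hd2
      ring_nf at e00
      have hd3 : d₃ = 4 := by omega
      subst hd3
      right; rfl
end

section
/- In SL(2,ℤ), the product (X₁⁻¹⁰X₂X₁¹⁰)·(X₁⁻⁶X₂X₁⁶)·(X₁⁻¹X₂X₁)·(X₁²X₂X₁⁻²)·(X₁⁶X₂X₁⁻⁶)·(X₁¹¹X₂X₁⁻¹¹) equals −X₁⁻²⁴. (Hence the sequence T̃₆ with conjugating exponents (10, 6, 1, −2, −6, −11) has total monodromy ±X₁^m and is a candidate Hurwitz system of a genus-1 simplified broken Lefschetz fibration with six Lefschetz singularities.) -/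
def A (n : ℤ) : SL2Z := ⟨!![1, 0; n, 1], by norm_num [Matrix.det_fin_two_of]⟩

lemma A_mul (m n : ℤ) : A m * A n = A (m + n) := by
  apply Subtype.ext
  show (A m).1 * (A n).1 = (A (m+n)).1
  simp only [A]
  ext i j
  fin_cases i <;> fin_cases j <;>
    simp [Matrix.mul_apply, Fin.sum_univ_two] <;> ring

lemma X1_zpow_s14 (n : ℤ) : X1 ^ n = A n := by
  induction n using Int.induction_on with
  | zero =>
    apply Subtype.ext
    show (1 : Matrix (Fin 2) (Fin 2) ℤ) = _
    simp [A]
    ext i j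
    fin_cases i <;> fin_cases j <;> simp [Matrix.one_apply]
  | succ k ih =>
    rw [zpow_add, zpow_one, ih]
    have : X1 = A 1 := rfl
    rw [this, A_mul]
  | pred k ih =>
    have h1 : X1⁻¹ = (A 1)⁻¹ := rfl
    have h2 : A (-(k:ℤ) - 1) * A 1 = A (-k) := by rw [A_mul]; ring_nf
    have h3 : A (-(k:ℤ)) * (A 1)⁻¹ = A (-k - 1) := by
      rw [← h2, mul_assoc, mul_inv_cancel, mul_one]
    rw [sub_eq_add_neg, zpow_add, zpow_neg_one, ih, h1, h3, sub_eq_add_neg]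

/-- the total monodromy of the candidate Hurwitz system `T̃₆`
equals `−X₁⁻²⁴` in `SL(2,ℤ)`. -/
theorem tilde_T6_total_monodromy :
    (X1 ^ (-10 : ℤ) * X2 * X1 ^ (10 : ℤ)) * (X1 ^ (-6 : ℤ) * X2 * X1 ^ (6 : ℤ))
      * (X1 ^ (-1 : ℤ) * X2 * X1 ^ (1 : ℤ)) * (X1 ^ (2 : ℤ) * X2 * X1 ^ (-2 : ℤ))
      * (X1 ^ (6 : ℤ) * X2 * X1 ^ (-6 : ℤ)) * (X1 ^ (11 : ℤ) * X2 * X1 ^ (-11 : ℤ))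
      = negE * X1 ^ (-24 : ℤ) := by
  simp only [X1_zpow_s14]
  apply Subtype.ext
  show _ = (negE).1 * (A (-24)).1
  simp only [A, X2, negE, Matrix.SpecialLinearGroup.coe_mul]
  ext i j
  fin_cases i <;> fin_cases j <;>
    rfl
end
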